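/- The refined tableau calculus Rf(box, T_{K_m(¬)}⁺), obtained from T_{K_m(¬)}⁺ by replacing the rule (box) with the rule (□): T([r]p,x), T_R(r,x,y) / T(p,y), is sound and constructively complete for the logic K_m(¬): every fully expanded Rf(box, T_{K_m(¬)}⁺)-tableau for a satisfiable finite set of K_m(¬)-formulas has an open branch, and from every open branch B of a fully expanded Rf(box, T_{K_m(¬)}⁺)-tableau a K_m(¬)-model with domain the labels of B can be constructed in which every tableau formula of B is true. -/

import Mathlib

set_option autoImplicit false

namespace KmNotTableau

/-- Relation terms of the logic `K_m(¬)`: `α ::= a_1 | … | a_m | ¬α`. -/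
inductive RTerm (m : ℕ) : Type
  | atom : Fin m → RTerm m
  | neg : RTerm m → RTerm m

/-- Formulas of the logic `K_m(¬)`: `φ ::= p | ¬φ | φ∨φ | [α]φ`. -/
inductive Fm (m : ℕ) : Type
  | var : ℕ → Fm m
  | neg : Fm m → Fm m
  | or : Fm m → Fm m → Fm m
  | box : RTerm m → Fm m → Fm m

/-- A `K_m(¬)`-model `M = (W, (R_a)_a, V)` with `W` nonempty. -/
structure KModel (m : ℕ) where
  W : Type
  ne : Nonempty W
  R : Fin m → W → W → Prop
  V : ℕ → W → Prop

/-- Interpretation of relation terms: `R_{¬α} = (W×W) ∖ R_α`. -/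
def KModel.RT {m : ℕ} (M : KModel m) : RTerm m → M.W → M.W → Prop
  | .atom a => M.R a
  | .neg α => fun v w => ¬ M.RT α v w

/-- Satisfaction in a `K_m(¬)`-model. -/
def KModel.sat {m : ℕ} (M : KModel m) : M.W → Fm m → Prop
  | v, .var p => M.V p v
  | v, .neg φ => ¬ M.sat v φ
  | v, .or φ ψ => M.sat v φ ∨ M.sat v ψ
  | v, .box α φ => ∀ w, M.RT α v w → M.sat w φ

/-- A set of formulas is satisfiable if some model and world satisfy all its members. -/
def Satisfiable {m : ℕ} (N : Set (Fm m)) : Prop :=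
  ∃ (M : KModel m) (v : M.W), ∀ φ ∈ N, M.sat v φ

/-- Labels: terms generated from the initial constant `a₀` and Skolem terms `f(α,φ,t)`. -/
inductive Label (m : ℕ) : Type
  | a0 : Label m
  | sk : RTerm m → Fm m → Label m → Label m

/-- Tableau formulas: `T(φ,t)`, `F(φ,t)`, `T_R(α,t,t')`, `F_R(α,t,t')`. -/
inductive TabFm (m : ℕ) : Type
  | T : Fm m → Label m → TabFm m
  | F : Fm m → Label m → TabFm m
  | TR : RTerm m → Label m → Label m → TabFm m
  | FR : RTerm m → Label m → Label m → TabFm m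

/-- The labels occurring in a tableau formula. -/
def TabFm.labels {m : ℕ} : TabFm m → Set (Label m)
  | .T _ t => {t}
  | .F _ t => {t}
  | .TR _ t t' => {t, t'}
  | .FR _ t t' => {t, t'}

/-- The labels occurring in a set of tableau formulas (the initial label `a₀`,
introduced at the root, always counts as occurring). -/
def Lab {m : ℕ} (B : Set (TabFm m)) : Set (Label m) :=
  insert Label.a0 {t | ∃ f ∈ B, t ∈ f.labels}

/-- A calculus: `C s ds` holds if, on a branch whose set of formulas is `s`, some rule
of the calculus is applicable with denominator instances `ds` (a closure rule
application has `ds = []`). -/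
abbrev Calc (m : ℕ) := Set (TabFm m) → List (Set (TabFm m)) → Prop

/-- The root node `{T(φ,a₀) | φ ∈ N}` of a tableau for input `N`. -/
def initial {m : ℕ} (N : Set (Fm m)) : Set (TabFm m) :=
  {f | ∃ φ ∈ N, f = TabFm.T φ Label.a0}

/-- A tableau for input `N` in calculus `C`: a finitely branching tree of sets of tableau
formulas (nodes indexed by positions `List ℕ`, children of `p` being `p ++ [i]`), whose
root is `{T(φ,a₀) | φ ∈ N}`, and such that the children of every node are obtained by
applying a rule of `C`: each child adds one denominator instance to the node's set. -/
structure Tableau (m : ℕ) (C : Calc m) (N : Set (Fm m)) where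
  node : List ℕ → Option (Set (TabFm m))
  rootEq : node [] = some (initial N)
  tree : ∀ (p : List ℕ) (i : ℕ), node (p ++ [i]) ≠ none → node p ≠ none
  step : ∀ (p : List ℕ) (s : Set (TabFm m)), node p = some s →
    (∀ i : ℕ, node (p ++ [i]) = none) ∨
    (∃ ds, C s ds ∧ ∀ i : ℕ, node (p ++ [i]) = (ds[i]?).map (fun d => s ∪ d))

/-- A branch of a tableau: a maximal path from the root (represented by its
set of positions, a maximal chain under the prefix order). -/
structure Branch {m : ℕ} {C : Calc m} {N : Set (Fm m)} (Tb : Tableau m C N) where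
  pos : Set (List ℕ)
  inTree : ∀ p ∈ pos, Tb.node p ≠ none
  chain : ∀ p ∈ pos, ∀ q ∈ pos, p <+: q ∨ q <+: p
  downClosed : ∀ p ∈ pos, ∀ q : List ℕ, q <+: p → q ∈ pos
  maximal : ∀ q : List ℕ, Tb.node q ≠ none → (∀ p ∈ pos, p <+: q ∨ q <+: p) → q ∈ pos

/-- The set of tableau formulas occurring on a branch. -/
def Branch.fmls {m : ℕ} {C : Calc m} {N : Set (Fm m)} {Tb : Tableau m C N}
    (Br : Branch Tb) : Set (TabFm m) :=
  {f | ∃ p ∈ Br.pos, ∃ s, Tb.node p = some s ∧ f ∈ s}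

/-- A branch is open if no closure rule has been applied (is applicable) on it. -/
def Branch.IsOpen {m : ℕ} {C : Calc m} {N : Set (Fm m)} {Tb : Tableau m C N}
    (Br : Branch Tb) : Prop := ¬ C Br.fmls []

/-- A tableau is fully expanded if on every open branch every applicable rule has been
applied, i.e. some denominator instance of the rule is already contained in the branch. -/
def Tableau.Expanded {m : ℕ} {C : Calc m} {N : Set (Fm m)} (Tb : Tableau m C N) : Prop :=
  ∀ Br : Branch Tb, Br.IsOpen → ∀ ds, C Br.fmls ds → ∃ d ∈ ds, d ⊆ Br.fmls

/-- A `K_m(¬)`-model whose domain is (a set of) labels: the model `I(B)` constructed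
from a branch has domain the set of labels occurring in `B`. -/
structure LModel (m : ℕ) where
  R : Fin m → Label m → Label m → Prop
  V : ℕ → Label m → Prop

/-- Interpretation of relation terms in a label model: `R_{¬α}` is the complement. -/
def LModel.RT {m : ℕ} (M : LModel m) : RTerm m → Label m → Label m → Prop
  | .atom a => M.R a
  | .neg α => fun t t' => ¬ M.RT α t t'

/-- Satisfaction in a label model relativised to its domain `D`. -/
def LModel.sat {m : ℕ} (M : LModel m) (D : Set (Label m)) : Label m → Fm m → Prop
  | t, .var p => M.V p t
  | t, .neg φ => ¬ M.sat D t φ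
  | t, .or φ ψ => M.sat D t φ ∨ M.sat D t ψ
  | t, .box α φ => ∀ t' ∈ D, M.RT α t t' → M.sat D t' φ

/-- Every tableau formula of `B` is true in the model `M` with domain `Lab B`:
`T(φ,t) ∈ B` implies `φ` holds at `t`; `F(φ,t) ∈ B` implies `φ` fails at `t`;
`T_R(α,t,t') ∈ B` implies `(t,t') ∈ R_α`; `F_R(α,t,t') ∈ B` implies `(t,t') ∉ R_α`. -/
def Reflects {m : ℕ} (M : LModel m) (B : Set (TabFm m)) : Prop :=
  (∀ φ t, TabFm.T φ t ∈ B → M.sat (Lab B) t φ) ∧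
  (∀ φ t, TabFm.F φ t ∈ B → ¬ M.sat (Lab B) t φ) ∧
  (∀ α t t', TabFm.TR α t t' ∈ B → M.RT α t t') ∧
  (∀ α t t', TabFm.FR α t t' ∈ B → ¬ M.RT α t t')

/-- The calculus `T_{K_m(¬)}`. -/
def TKmNot (m : ℕ) : Calc m := fun s ds =>
  -- (¬⁺) T(¬p,x) / F(p,x)
  (∃ φ x, TabFm.T (.neg φ) x ∈ s ∧ ds = [{TabFm.F φ x}]) ∨
  -- (¬⁻) F(¬p,x) / T(p,x)
  (∃ φ x, TabFm.F (.neg φ) x ∈ s ∧ ds = [{TabFm.T φ x}]) ∨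
  -- (∨⁺) T(p∨q,x) / T(p,x) | T(q,x)
  (∃ φ ψ x, TabFm.T (.or φ ψ) x ∈ s ∧ ds = [{TabFm.T φ x}, {TabFm.T ψ x}]) ∨
  -- (∨⁻) F(p∨q,x) / F(p,x), F(q,x)
  (∃ φ ψ x, TabFm.F (.or φ ψ) x ∈ s ∧ ds = [{TabFm.F φ x, TabFm.F ψ x}]) ∨
  -- (box) T([r]p,x) / F_R(r,x,y) | T(p,y), for any label y occurring on the branch
  (∃ α φ x y, TabFm.T (.box α φ) x ∈ s ∧ y ∈ Lab s ∧
    ds = [{TabFm.FR α x y}, {TabFm.T φ y}]) ∨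
  -- (dia) F([r]p,x) / T_R(r,x,f(r,p,x)), F(p,f(r,p,x))
  (∃ α φ x, TabFm.F (.box α φ) x ∈ s ∧
    ds = [{TabFm.TR α x (Label.sk α φ x), TabFm.F φ (Label.sk α φ x)}]) ∨
  -- closure rules
  (∃ φ x, TabFm.T φ x ∈ s ∧ TabFm.F φ x ∈ s ∧ ds = []) ∨
  (∃ α x y, TabFm.TR α x y ∈ s ∧ TabFm.FR α x y ∈ s ∧ ds = []) ∨
  -- (¬R⁺) T_R(¬r,x,y) / F_R(r,x,y)
  (∃ α x y, TabFm.TR (.neg α) x y ∈ s ∧ ds = [{TabFm.FR α x y}]) ∨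
  -- (¬R⁻) F_R(¬r,x,y) / T_R(r,x,y)
  (∃ α x y, TabFm.FR (.neg α) x y ∈ s ∧ ds = [{TabFm.TR α x y}])

/-- The refined calculus `Rf(box, T_{K_m(¬)})`: `T_{K_m(¬)}` with the rule (box)
replaced by the rule (□): `T([r]p,x), T_R(r,x,y) / T(p,y)`. -/
def RfKmNot (m : ℕ) : Calc m := fun s ds =>
  (∃ φ x, TabFm.T (.neg φ) x ∈ s ∧ ds = [{TabFm.F φ x}]) ∨
  (∃ φ x, TabFm.F (.neg φ) x ∈ s ∧ ds = [{TabFm.T φ x}]) ∨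
  (∃ φ ψ x, TabFm.T (.or φ ψ) x ∈ s ∧ ds = [{TabFm.T φ x}, {TabFm.T ψ x}]) ∨
  (∃ φ ψ x, TabFm.F (.or φ ψ) x ∈ s ∧ ds = [{TabFm.F φ x, TabFm.F ψ x}]) ∨
  -- (□) T([r]p,x), T_R(r,x,y) / T(p,y)
  (∃ α φ x y, TabFm.T (.box α φ) x ∈ s ∧ TabFm.TR α x y ∈ s ∧ ds = [{TabFm.T φ y}]) ∨
  (∃ α φ x, TabFm.F (.box α φ) x ∈ s ∧
    ds = [{TabFm.TR α x (Label.sk α φ x), TabFm.F φ (Label.sk α φ x)}]) ∨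
  (∃ φ x, TabFm.T φ x ∈ s ∧ TabFm.F φ x ∈ s ∧ ds = []) ∨
  (∃ α x y, TabFm.TR α x y ∈ s ∧ TabFm.FR α x y ∈ s ∧ ds = []) ∨
  (∃ α x y, TabFm.TR (.neg α) x y ∈ s ∧ ds = [{TabFm.FR α x y}]) ∨
  (∃ α x y, TabFm.FR (.neg α) x y ∈ s ∧ ds = [{TabFm.TR α x y}])

/-- The refined calculus `Rf(box, T_{K_m(¬)}⁺)`: `T_{K_m(¬)}⁺` with the rule (box)
replaced by the rule (□): `T([r]p,x), T_R(r,x,y) / T(p,y)`; the rule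
(□¬): `T([¬r]p,x) / T_R(r,x,y) | T(p,y)` (for any label `y` on the branch) is kept. -/
def RfKmNotPlus (m : ℕ) : Calc m := fun s ds =>
  RfKmNot m s ds ∨
  -- (□¬) T([¬r]p,x) / T_R(r,x,y) | T(p,y), for any label y occurring on the branch
  (∃ α φ x y, TabFm.T (.box (.neg α) φ) x ∈ s ∧ y ∈ Lab s ∧
    ds = [{TabFm.TR α x y}, {TabFm.T φ y}])
section Aux

open Classical

variable {m : ℕ}

/-! ### Rule application helpers -/

lemma r_negT {s : Set (TabFm m)} {φ : Fm m} {x : Label m} (h : TabFm.T (.neg φ) x ∈ s) :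
    RfKmNotPlus m s [{TabFm.F φ x}] := Or.inl (Or.inl ⟨φ, x, h, rfl⟩)

lemma r_negF {s : Set (TabFm m)} {φ : Fm m} {x : Label m} (h : TabFm.F (.neg φ) x ∈ s) :
    RfKmNotPlus m s [{TabFm.T φ x}] := Or.inl (Or.inr (Or.inl ⟨φ, x, h, rfl⟩))

lemma r_orT {s : Set (TabFm m)} {φ ψ : Fm m} {x : Label m} (h : TabFm.T (.or φ ψ) x ∈ s) :
    RfKmNotPlus m s [{TabFm.T φ x}, {TabFm.T ψ x}] :=
  Or.inl (Or.inr (Or.inr (Or.inl ⟨φ, ψ, x, h, rfl⟩)))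

lemma r_orF {s : Set (TabFm m)} {φ ψ : Fm m} {x : Label m} (h : TabFm.F (.or φ ψ) x ∈ s) :
    RfKmNotPlus m s [{TabFm.F φ x, TabFm.F ψ x}] :=
  Or.inl (Or.inr (Or.inr (Or.inr (Or.inl ⟨φ, ψ, x, h, rfl⟩))))

lemma r_box {s : Set (TabFm m)} {α : RTerm m} {φ : Fm m} {x y : Label m}
    (h1 : TabFm.T (.box α φ) x ∈ s) (h2 : TabFm.TR α x y ∈ s) :
    RfKmNotPlus m s [{TabFm.T φ y}] :=
  Or.inl (Or.inr (Or.inr (Or.inr (Or.inr (Or.inl ⟨α, φ, x, y, h1, h2, rfl⟩)))))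

lemma r_dia {s : Set (TabFm m)} {α : RTerm m} {φ : Fm m} {x : Label m}
    (h : TabFm.F (.box α φ) x ∈ s) :
    RfKmNotPlus m s [{TabFm.TR α x (Label.sk α φ x), TabFm.F φ (Label.sk α φ x)}] :=
  Or.inl (Or.inr (Or.inr (Or.inr (Or.inr (Or.inr (Or.inl ⟨α, φ, x, h, rfl⟩))))))

lemma r_closeTF {s : Set (TabFm m)} {φ : Fm m} {x : Label m}
    (h1 : TabFm.T φ x ∈ s) (h2 : TabFm.F φ x ∈ s) : RfKmNotPlus m s [] :=
  Or.inl (Or.inr (Or.inr (Or.inr (Or.inr (Or.inr (Or.inr (Or.inl ⟨φ, x, h1, h2, rfl⟩)))))))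

lemma r_closeR {s : Set (TabFm m)} {α : RTerm m} {x y : Label m}
    (h1 : TabFm.TR α x y ∈ s) (h2 : TabFm.FR α x y ∈ s) : RfKmNotPlus m s [] :=
  Or.inl (Or.inr (Or.inr (Or.inr (Or.inr (Or.inr (Or.inr (Or.inr (Or.inl ⟨α, x, y, h1, h2, rfl⟩))))))))

lemma r_negRT {s : Set (TabFm m)} {α : RTerm m} {x y : Label m}
    (h : TabFm.TR (.neg α) x y ∈ s) : RfKmNotPlus m s [{TabFm.FR α x y}] :=
  Or.inl (Or.inr (Or.inr (Or.inr (Or.inr (Or.inr (Or.inr (Or.inr (Or.inr (Or.inl ⟨α, x, y, h, rfl⟩)))))))))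

lemma r_negRF {s : Set (TabFm m)} {α : RTerm m} {x y : Label m}
    (h : TabFm.FR (.neg α) x y ∈ s) : RfKmNotPlus m s [{TabFm.TR α x y}] :=
  Or.inl (Or.inr (Or.inr (Or.inr (Or.inr (Or.inr (Or.inr (Or.inr (Or.inr (Or.inr ⟨α, x, y, h, rfl⟩)))))))))

lemma r_boxNeg {s : Set (TabFm m)} {α : RTerm m} {φ : Fm m} {x y : Label m}
    (h : TabFm.T (.box (.neg α) φ) x ∈ s) (hy : y ∈ Lab s) :
    RfKmNotPlus m s [{TabFm.TR α x y}, {TabFm.T φ y}] := Or.inr ⟨α, φ, x, y, h, hy, rfl⟩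

/-! ### Model existence from an open, fully expanded branch -/

lemma model_exists (B : Set (TabFm m)) (hOpen : ¬ RfKmNotPlus m B [])
    (hE : ∀ ds, RfKmNotPlus m B ds → ∃ d ∈ ds, d ⊆ B) :
    ∃ M : LModel m, Reflects M B := by
  classical
  let M : LModel m := ⟨fun a t t' => TabFm.TR (.atom a) t t' ∈ B,
                       fun p t => TabFm.T (.var p) t ∈ B⟩
  have hone : ∀ d : Set (TabFm m), RfKmNotPlus m B [d] → d ⊆ B := by
    intro d h
    obtain ⟨d', hd', hsub⟩ := hE [d] h
    simp only [List.mem_singleton] at hd'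
    subst hd'; exact hsub
  have rel : ∀ (α : RTerm m) (t t' : Label m),
      (TabFm.TR α t t' ∈ B → M.RT α t t') ∧ (TabFm.FR α t t' ∈ B → ¬ M.RT α t t') := by
    intro α
    induction α with
    | atom a =>
      intro t t'
      exact ⟨fun h => h, fun hF hT => hOpen (r_closeR hT hF)⟩
    | neg β ih =>
      intro t t'
      constructor
      · intro h
        have hF : TabFm.FR β t t' ∈ B := hone _ (r_negRT h) rfl
        exact fun hR => (ih t t').2 hF hR
      · intro h
        have hT : TabFm.TR β t t' ∈ B := hone _ (r_negRF h) rfl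
        exact fun hn => hn ((ih t t').1 hT)
  have fm : ∀ (φ : Fm m) (t : Label m),
      (TabFm.T φ t ∈ B → M.sat (Lab B) t φ) ∧ (TabFm.F φ t ∈ B → ¬ M.sat (Lab B) t φ) := by
    intro φ
    induction φ with
    | var p =>
      intro t
      exact ⟨fun h => h, fun hF hT => hOpen (r_closeTF hT hF)⟩
    | neg φ ih =>
      intro t
      constructor
      · intro h
        have hF : TabFm.F φ t ∈ B := hone _ (r_negT h) rfl
        exact (ih t).2 hF
      · intro h
        have hT : TabFm.T φ t ∈ B := hone _ (r_negF h) rfl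
        exact fun hn => hn ((ih t).1 hT)
    | or φ ψ ihφ ihψ =>
      intro t
      constructor
      · intro h
        obtain ⟨d, hd, hsub⟩ := hE _ (r_orT h)
        simp only [List.mem_cons, List.mem_singleton, List.not_mem_nil, or_false] at hd
        rcases hd with rfl | rfl
        · exact Or.inl ((ihφ t).1 (hsub rfl))
        · exact Or.inr ((ihψ t).1 (hsub rfl))
      · intro h
        have hsub : _ ⊆ B := hone _ (r_orF h)
        have h1 : TabFm.F φ t ∈ B := hsub (Or.inl rfl)
        have h2 : TabFm.F ψ t ∈ B := hsub (Or.inr rfl)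
        rintro (hφ | hψ)
        · exact (ihφ t).2 h1 hφ
        · exact (ihψ t).2 h2 hψ
    | box α φ ih =>
      intro t
      constructor
      · intro h
        intro t' ht' hR
        cases α with
        | atom a =>
          have hTR : TabFm.TR (.atom a) t t' ∈ B := hR
          exact (ih t').1 (hone _ (r_box h hTR) rfl)
        | neg β =>
          obtain ⟨d, hd, hsub⟩ := hE _ (r_boxNeg h ht')
          simp only [List.mem_cons, List.mem_singleton, List.not_mem_nil, or_false] at hd
          rcases hd with rfl | rfl
          · exact absurd ((rel β t t').1 (hsub rfl)) hR
          · exact (ih t').1 (hsub rfl)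
      · intro h
        have hsub : _ ⊆ B := hone _ (r_dia h)
        have h1 : TabFm.TR α t (Label.sk α φ t) ∈ B := hsub (Or.inl rfl)
        have h2 : TabFm.F φ (Label.sk α φ t) ∈ B := hsub (Or.inr rfl)
        intro hsat
        have hmem : Label.sk α φ t ∈ Lab B :=
          Set.mem_insert_iff.mpr (Or.inr ⟨_, h1, Or.inr rfl⟩)
        exact (ih _).2 h2 (hsat _ hmem ((rel α t _).1 h1))
  exact ⟨M, fun φ t => (fm φ t).1, fun φ t => (fm φ t).2,
    fun α t t' => (rel α t t').1, fun α t t' => (rel α t t').2⟩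

end Aux
section Sound

open Classical

variable {m : ℕ}

/-- Skolem-style global label assignment built from a model and a distinguished world. -/
noncomputable def iota (M : KModel m) (v : M.W) : Label m → M.W
  | .a0 => v
  | .sk α φ x =>
      if h : ∃ w, M.RT α (iota M v x) w ∧ ¬ M.sat w φ then h.choose
      else Classical.choice M.ne

/-- Truth of a tableau formula under a label assignment. -/
def holds (M : KModel m) (ι : Label m → M.W) : TabFm m → Prop
  | .T φ t => M.sat (ι t) φ
  | .F φ t => ¬ M.sat (ι t) φ
  | .TR α t t' => M.RT α (ι t) (ι t')
  | .FR α t t' => ¬ M.RT α (ι t) (ι t')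

lemma sound_step (M : KModel m) (v : M.W) {s : Set (TabFm m)} {ds : List (Set (TabFm m))}
    (hs : ∀ f ∈ s, holds M (iota M v) f) (h : RfKmNotPlus m s ds) :
    ∃ d ∈ ds, ∀ f ∈ d, holds M (iota M v) f := by
  classical
  rcases h with (⟨φ,x,hh,rfl⟩ | ⟨φ,x,hh,rfl⟩ | ⟨φ,ψ,x,hh,rfl⟩ | ⟨φ,ψ,x,hh,rfl⟩ |
      ⟨α,φ,x,y,h1,h2,rfl⟩ | ⟨α,φ,x,hh,rfl⟩ | ⟨φ,x,h1,h2,rfl⟩ | ⟨α,x,y,h1,h2,rfl⟩ |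
      ⟨α,x,y,hh,rfl⟩ | ⟨α,x,y,hh,rfl⟩) | ⟨α,φ,x,y,hh,hy,rfl⟩
  · refine ⟨_, List.mem_singleton_self _, ?_⟩
    have := hs _ hh
    simp only [holds, KModel.sat] at this ⊢
    simpa using this
  · refine ⟨_, List.mem_singleton_self _, ?_⟩
    have := hs _ hh
    simp only [holds, KModel.sat, not_not] at this ⊢
    simpa using this
  · have := hs _ hh
    simp only [holds, KModel.sat] at this
    rcases this with h1 | h1
    · exact ⟨_, List.mem_cons_self, by simpa [holds] using h1⟩
    · exact ⟨_, List.mem_cons_of_mem _ (List.mem_singleton_self _), by simpa [holds] using h1⟩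
  · have := hs _ hh
    simp only [holds, KModel.sat] at this
    push_neg at this
    refine ⟨_, List.mem_singleton_self _, ?_⟩
    rintro f (rfl | rfl)
    · exact this.1
    · exact this.2
  · have hb := hs _ h1
    have hr := hs _ h2
    simp only [holds, KModel.sat] at hb hr
    refine ⟨_, List.mem_singleton_self _, ?_⟩
    rintro f rfl
    exact hb _ hr
  · have hb := hs _ hh
    simp only [holds, KModel.sat] at hb
    push_neg at hb
    refine ⟨_, List.mem_singleton_self _, ?_⟩
    have hι : iota M v (Label.sk α φ x) = hb.choose := by
      simp only [iota, dif_pos hb]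
    rintro f (rfl | rfl)
    · show M.RT α (iota M v x) (iota M v (Label.sk α φ x))
      rw [hι]; exact hb.choose_spec.1
    · show ¬ M.sat (iota M v (Label.sk α φ x)) φ
      rw [hι]; exact hb.choose_spec.2
  · exact absurd (hs _ h1) (hs _ h2)
  · exact absurd (hs _ h1) (hs _ h2)
  · refine ⟨_, List.mem_singleton_self _, ?_⟩
    have := hs _ hh
    simp only [holds, KModel.RT] at this ⊢
    simpa using this
  · refine ⟨_, List.mem_singleton_self _, ?_⟩
    have := hs _ hh
    simp only [holds, KModel.RT, not_not] at this ⊢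
    simpa using this
  · by_cases hR : M.RT α (iota M v x) (iota M v y)
    · refine ⟨_, List.mem_cons_self, ?_⟩
      rintro f rfl
      exact hR
    · refine ⟨_, List.mem_cons_of_mem _ (List.mem_singleton_self _), ?_⟩
      rintro f rfl
      have := hs _ hh
      simp only [holds, KModel.sat] at this
      exact this _ hR

/-! ### Tree lemmas -/

lemma node_ne_of_prefix {C : Calc m} {N : Set (Fm m)} (Tb : Tableau m C N) :
    ∀ (r p : List ℕ), Tb.node (p ++ r) ≠ none → Tb.node p ≠ none := by
  intro r
  induction r using List.reverseRecOn with
  | nil => intro p h; simpa using h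
  | append_singleton r i ih =>
    intro p h
    rw [← List.append_assoc] at h
    exact ih p (Tb.tree (p ++ r) i h)

lemma subset_of_child {C : Calc m} {N : Set (Fm m)} (Tb : Tableau m C N)
    {p : List ℕ} {i : ℕ} {s s' : Set (TabFm m)}
    (hp : Tb.node p = some s) (hc : Tb.node (p ++ [i]) = some s') : s ⊆ s' := by
  rcases Tb.step p s hp with h | ⟨ds, _, h⟩
  · rw [h i] at hc; exact absurd hc (by simp)
  · rw [h i] at hc
    rcases hd : ds[i]? with _ | d
    · rw [hd] at hc; simp at hc
    · rw [hd] at hc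
      simp only [Option.map_some, Option.some.injEq] at hc
      rw [← hc]
      exact Set.subset_union_left

lemma subset_of_prefix {C : Calc m} {N : Set (Fm m)} (Tb : Tableau m C N) :
    ∀ (r p : List ℕ) {s s' : Set (TabFm m)},
      Tb.node p = some s → Tb.node (p ++ r) = some s' → s ⊆ s' := by
  intro r
  induction r using List.reverseRecOn with
  | nil =>
    intro p s s' h1 h2
    simp only [List.append_nil, h1, Option.some.injEq] at h2
    rw [h2]
  | append_singleton r i ih =>
    intro p s s' h1 h2
    rw [← List.append_assoc] at h2
    have hne : Tb.node (p ++ r) ≠ none := Tb.tree _ i (by rw [h2]; simp)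
    obtain ⟨s'', hs''⟩ := Option.ne_none_iff_exists'.mp hne
    exact (ih p h1 hs'').trans (subset_of_child Tb hs'' h2)

end Sound
/-- The refined tableau calculus `Rf(box, T_{K_m(¬)}⁺)`, obtained from
`T_{K_m(¬)}⁺` by replacing the rule (box) with the rule (□): `T([r]p,x), T_R(r,x,y) /
T(p,y)`, is sound and constructively complete for the logic `K_m(¬)`: every fully
expanded `Rf(box, T_{K_m(¬)}⁺)`-tableau for a satisfiable finite set of
`K_m(¬)`-formulas has an open branch, and from every open branch `B` of a fully expanded
`Rf(box, T_{K_m(¬)}⁺)`-tableau a `K_m(¬)`-model with domain the labels of `B` can be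
constructed in which every tableau formula of `B` is true. -/
theorem RfKmNotPlus_sound_and_constructively_complete (m : ℕ) :
    (∀ N : Set (Fm m), N.Finite → Satisfiable N →
      ∀ Tb : Tableau m (RfKmNotPlus m) N, Tb.Expanded → ∃ Br : Branch Tb, Br.IsOpen) ∧
    (∀ (N : Set (Fm m)) (Tb : Tableau m (RfKmNotPlus m) N), Tb.Expanded →
      ∀ Br : Branch Tb, Br.IsOpen → ∃ M : LModel m, Reflects M Br.fmls) := by
  constructor
  · -- Soundness
    intro N _hfin hsat Tb _hExp
    obtain ⟨M, v, hv⟩ := hsat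
    classical
    set ι := iota M v with hι
    let Good : List ℕ → Prop := fun p => ∃ s, Tb.node p = some s ∧ ∀ f ∈ s, holds M ι f
    have hroot : Good [] := by
      refine ⟨initial N, Tb.rootEq, ?_⟩
      rintro f ⟨φ, hφ, rfl⟩
      show M.sat (ι Label.a0) φ
      rw [hι]; exact hv φ hφ
    have hstep : ∀ p : List ℕ, ∃ q,
        ((Good p ∧ ∃ i, Tb.node (p ++ [i]) ≠ none) → Good q ∧ ∃ i, q = p ++ [i]) ∧
        (¬ (Good p ∧ ∃ i, Tb.node (p ++ [i]) ≠ none) → q = p) := by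
      intro p
      by_cases hc : Good p ∧ ∃ i, Tb.node (p ++ [i]) ≠ none
      · obtain ⟨⟨s, hps, hsg⟩, i0, hi0⟩ := hc
        rcases Tb.step p s hps with hnone | ⟨ds, hds, hch⟩
        · exact absurd (hnone i0) hi0
        · obtain ⟨d, hd, hdh⟩ := sound_step M v hsg hds
          obtain ⟨j, hj, hjd⟩ := List.mem_iff_getElem.mp hd
          refine ⟨p ++ [j], fun _ => ⟨⟨s ∪ d, ?_, ?_⟩, j, rfl⟩,
            fun hn => absurd ⟨⟨s, hps, hsg⟩, i0, hi0⟩ hn⟩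
          · rw [hch j, List.getElem?_eq_getElem hj, hjd]; rfl
          · rintro f (hf | hf)
            exacts [hsg f hf, hdh f hf]
      · exact ⟨p, fun h => absurd h hc, fun _ => rfl⟩
    choose nxt hnxt1 hnxt2 using hstep
    let seq : ℕ → List ℕ := fun n => nxt^[n] []
    have seq_succ : ∀ n, seq (n + 1) = nxt (seq n) := fun n =>
      Function.iterate_succ_apply' nxt n []
    have seq_good : ∀ n, Good (seq n) := by
      intro n
      induction n with
      | zero => exact hroot
      | succ n ih =>
        rw [seq_succ]
        by_cases hc : Good (seq n) ∧ ∃ i, Tb.node (seq n ++ [i]) ≠ none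
        · exact (hnxt1 _ hc).1
        · rw [hnxt2 _ hc]; exact ih
    have seq_pref : ∀ n, seq n <+: seq (n + 1) := by
      intro n
      rw [seq_succ]
      by_cases hc : Good (seq n) ∧ ∃ i, Tb.node (seq n ++ [i]) ≠ none
      · obtain ⟨_, i, hi⟩ := hnxt1 _ hc
        rw [hi]; exact ⟨[i], rfl⟩
      · rw [hnxt2 _ hc]
    have seq_mono : ∀ {a b : ℕ}, a ≤ b → seq a <+: seq b := by
      intro a b hab
      induction hab with
      | refl => exact List.prefix_refl _
      | step _ ih => exact ih.trans (seq_pref _)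
    let P : Set (List ℕ) := {p | ∃ n, p <+: seq n}
    have hInTree : ∀ p ∈ P, Tb.node p ≠ none := by
      rintro p ⟨n, hn⟩
      obtain ⟨s, hs, _⟩ := seq_good n
      obtain ⟨r, hr⟩ := hn
      refine node_ne_of_prefix Tb r p ?_
      rw [hr, hs]; simp
    refine ⟨⟨P, hInTree, ?_, ?_, ?_⟩, ?_⟩
    · -- chain
      rintro p ⟨n, hp⟩ q ⟨k, hq⟩
      rcases le_total n k with h | h
      · exact List.prefix_or_prefix_of_prefix (hp.trans (seq_mono h)) hq
      · exact List.prefix_or_prefix_of_prefix hp (hq.trans (seq_mono h))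
    · -- downClosed
      rintro p ⟨n, hp⟩ q hq
      exact ⟨n, hq.trans hp⟩
    · -- maximal
      intro q hq hcomp
      by_contra hqP
      have hall : ∀ n, seq n <+: q := by
        intro n
        rcases hcomp (seq n) ⟨n, List.prefix_refl _⟩ with h | h
        · exact h
        · exact absurd ⟨n, h⟩ hqP
      by_cases hst : ∀ n, Good (seq n) ∧ ∃ i, Tb.node (seq n ++ [i]) ≠ none
      · have hlen : ∀ n, (seq n).length = n := by
          intro n
          induction n with
          | zero => rfl
          | succ n ih =>
            rw [seq_succ]
            obtain ⟨_, i, hi⟩ := hnxt1 _ (hst n)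
            rw [hi]
            simp [ih]
        have hle := (hall (q.length + 1)).length_le
        rw [hlen] at hle
        omega
      · push_neg at hst
        obtain ⟨n, hn⟩ := hst
        have hnochild := hn (seq_good n)
        obtain ⟨r, hr⟩ := hall n
        cases r with
        | nil =>
          refine hqP ⟨n, ?_⟩
          rw [← hr]
          simp
        | cons j r' =>
          have hne : Tb.node (seq n ++ [j]) ≠ none := by
            refine node_ne_of_prefix Tb r' (seq n ++ [j]) ?_
            rw [List.append_assoc]
            simpa [hr] using hq
          exact hne (hnochild j)
    · -- open
      show ¬ RfKmNotPlus m ({f | ∃ p ∈ P, ∃ s, Tb.node p = some s ∧ f ∈ s}) []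
      intro hC
      have hfh : ∀ f ∈ ({f | ∃ p ∈ P, ∃ s, Tb.node p = some s ∧ f ∈ s} : Set (TabFm m)),
          holds M ι f := by
        rintro f ⟨p, ⟨n, hpn⟩, s, hps, hfs⟩
        obtain ⟨sn, hsn, hsng⟩ := seq_good n
        obtain ⟨r, hr⟩ := hpn
        rw [← hr] at hsn
        exact hsng f (subset_of_prefix Tb r p hps hsn hfs)
      obtain ⟨d, hd, -⟩ := sound_step M v hfh hC
      simp at hd
  · -- Completeness
    intro N Tb hExp Br hOpen
    exact model_exists Br.fmls hOpen (hExp Br hOpen)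
end KmNotTableau
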